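/- (Fundamental inequality.) Let G be a countable group generated by a finite symmetric set S, and let μ be a symmetric probability measure (μ({g}) = μ({g⁻¹})) whose support is S. Let v = lim_n (log |W_n|)/n be the logarithmic volume of G in the generators S, let h = h(G, μ) = lim_n H(μ^{*n})/n be the entropy of (G, μ), and let l = l(μ) = lim_n E_{μ^{*n}}[l_S]/n be the drift. Then h ≤ l · v. -/

import Mathlib

open Filter

/-- The word length of `g` with respect to a generating set `S`. -/
noncomputable def wordLength {G : Type*} [Group G] (S : Set G) (g : G) : ℕ :=
  sInf {n | ∃ w : List G, (∀ x ∈ w, x ∈ S) ∧ w.length = n ∧ w.prod = g}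

/-- The sphere of radius `n`: elements of word length exactly `n`. -/
def wordSphere {G : Type*} [Group G] (S : Set G) (n : ℕ) : Set G :=
  {g | wordLength S g = n}

/-- Shannon entropy `H(ν) = −Σ_g ν(g) log ν(g)` (natural logarithm, `0 log 0 = 0`). -/
noncomputable def shannonEntropy {G : Type*} (ν : G → ℝ) : ℝ :=
  -∑ᶠ g, ν g * Real.log (ν g)

/-- Convolution of two densities on a group: `(ν₁ * ν₂)(g) = Σ_{ab = g} ν₁(a) ν₂(b)`. -/
noncomputable def convMeas {G : Type*} [Group G] (ν₁ ν₂ : G → ℝ) : G → ℝ :=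
  fun g => ∑ᶠ a, ν₁ a * ν₂ (a⁻¹ * g)

/-- The `n`-fold convolution `μ^{*n}` of a density `μ` with itself. -/
noncomputable def convPow {G : Type*} [Group G] (μ : G → ℝ) : ℕ → G → ℝ
  | 0 => Set.indicator {(1 : G)} (fun _ => (1 : ℝ))
  | n + 1 => convMeas (convPow μ n) μ

/-- `l_n(μ) = Σ_g μ^{*n}(g) l_S(g)`, the expected word length after `n` steps. -/
noncomputable def meanLength {G : Type*} [Group G] (S : Set G) (μ : G → ℝ) (n : ℕ) : ℝ :=
  ∑ᶠ g, convPow μ n g * (wordLength S g : ℝ)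


section FIhelpers
open Function Pointwise

/-- Aux: membership in `S ^ n` iff product of a word of length `n` over `S`. -/
lemma FI.mem_pow_iff_word {G : Type*} [Group G] (S : Set G) :
    ∀ (n : ℕ) (g : G), g ∈ S ^ n ↔
      ∃ w : List G, (∀ x ∈ w, x ∈ S) ∧ w.length = n ∧ w.prod = g := by
  intro n
  induction n with
  | zero =>
    intro g
    simp only [pow_zero, Set.mem_one]
    constructor
    · rintro rfl; exact ⟨[], by simp, rfl, rfl⟩
    · rintro ⟨w, -, hlen, hprod⟩
      rw [List.length_eq_zero_iff] at hlen; subst hlen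
      simpa using hprod.symm
  | succ n ih =>
    intro g
    rw [pow_succ']
    constructor
    · rintro ⟨s, hs, p, hp, rfl⟩
      obtain ⟨w, hw, hlen, hprod⟩ := (ih p).1 hp
      refine ⟨s :: w, ?_, by simp [hlen], by simp [hprod]⟩
      intro x hx
      rcases List.mem_cons.1 hx with rfl | hx
      exacts [hs, hw x hx]
    · rintro ⟨w, hw, hlen, hprod⟩
      cases w with
      | nil => simp at hlen
      | cons a t =>
        refine ⟨a, hw a (by simp), t.prod, (ih t.prod).2 ⟨t, fun x hx => hw x (by simp [hx]),
          by simpa using hlen, rfl⟩, by simpa using hprod⟩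

lemma FI.pow_finite {G : Type*} [Group G] {S : Set G} (hS : S.Finite) (n : ℕ) :
    (S ^ n : Set G).Finite := by
  induction n with
  | zero => simpa [pow_zero] using Set.finite_one
  | succ n ih => rw [pow_succ]; exact ih.mul hS

lemma FI.wordLength_le_of_mem_pow {G : Type*} [Group G] {S : Set G} {n : ℕ} {g : G}
    (h : g ∈ S ^ n) : wordLength S g ≤ n := by
  obtain ⟨w, hw, hlen, hprod⟩ := (FI.mem_pow_iff_word S n g).1 h
  exact Nat.sInf_le ⟨w, hw, hlen, hprod⟩

/-- Every element has some word over a symmetric generating set. -/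
lemma FI.exists_word {G : Type*} [Group G] {S : Set G} (hSsym : ∀ s ∈ S, s⁻¹ ∈ S)
    (hSgen : Subgroup.closure S = ⊤) (g : G) :
    ∃ w : List G, (∀ x ∈ w, x ∈ S) ∧ w.prod = g := by
  have hg : g ∈ Submonoid.closure (S ∪ S⁻¹) := by
    rw [← Subgroup.closure_toSubmonoid, hSgen]
    trivial
  have hUnion : S ∪ S⁻¹ = S := by
    apply Set.union_eq_self_of_subset_right
    intro x hx
    simpa using hSsym x⁻¹ hx
  rw [hUnion] at hg
  exact Submonoid.exists_list_of_mem_closure hg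

lemma FI.sphere_subset_pow {G : Type*} [Group G] {S : Set G} (hSsym : ∀ s ∈ S, s⁻¹ ∈ S)
    (hSgen : Subgroup.closure S = ⊤) (n : ℕ) :
    wordSphere S n ⊆ S ^ n := by
  intro g hg
  obtain ⟨w, hw, hprod⟩ := FI.exists_word hSsym hSgen g
  have hne : {m | ∃ w : List G, (∀ x ∈ w, x ∈ S) ∧ w.length = m ∧ w.prod = g}.Nonempty :=
    ⟨w.length, w, hw, rfl, hprod⟩
  have := Nat.sInf_mem hne
  rw [show sInf {m | ∃ w : List G, (∀ x ∈ w, x ∈ S) ∧ w.length = m ∧ w.prod = g}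
      = wordLength S g from rfl, hg] at this
  exact (FI.mem_pow_iff_word S n g).2 this

/-- Log-sum (Jensen) inequality for entropy on a finite set. -/
lemma FI.jensen {α : Type*} (B : Finset α) (q : α → ℝ) (hq : ∀ g ∈ B, 0 ≤ q g) :
    -∑ g ∈ B, q g * Real.log (q g) ≤
      (∑ g ∈ B, q g) * Real.log B.card - (∑ g ∈ B, q g) * Real.log (∑ g ∈ B, q g) := by
  set p := ∑ g ∈ B, q g with hp
  rcases eq_or_lt_of_le (Finset.sum_nonneg hq) with h0 | h0
  · have hz : ∀ g ∈ B, q g = 0 := (Finset.sum_eq_zero_iff_of_nonneg hq).1 h0.symm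
    have : ∑ g ∈ B, q g * Real.log (q g) = 0 :=
      Finset.sum_eq_zero fun g hg => by rw [hz g hg]; ring
    rw [this, show p = 0 from hp.trans h0.symm]
    simp
  · have hBne : B.Nonempty := by
      rcases B.eq_empty_or_nonempty with rfl | hne
      · simp [hp] at h0
      · exact hne
    have hBpos : (0 : ℝ) < B.card := by exact_mod_cast Finset.card_pos.2 hBne
    have key : ∀ g ∈ B, -(q g * Real.log (q g)) ≤
        q g * Real.log B.card - q g * Real.log p + (p / B.card - q g) := by
      intro g hg
      rcases eq_or_lt_of_le (hq g hg) with hz | hpos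
      · rw [← hz]
        simp only [zero_mul, neg_zero, sub_zero, zero_sub, neg_zero, sub_zero]
        have : (0:ℝ) ≤ p / B.card := div_nonneg h0.le hBpos.le
        linarith
      · have hlog : Real.log (p / (B.card * q g)) ≤ p / (B.card * q g) - 1 :=
          Real.log_le_sub_one_of_pos (by positivity)
        have hmul : q g * Real.log (p / (B.card * q g)) ≤ p / B.card - q g := by
          have := mul_le_mul_of_nonneg_left hlog (hq g hg)
          calc q g * Real.log (p / (B.card * q g)) ≤ q g * (p / (B.card * q g) - 1) := this
            _ = p / B.card - q g := by field_simp
        have hexp : q g * Real.log (p / (B.card * q g))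
            = q g * Real.log p - q g * Real.log B.card - q g * Real.log (q g) := by
          rw [Real.log_div (ne_of_gt h0) (by positivity),
            Real.log_mul (ne_of_gt hBpos) (ne_of_gt hpos)]
          ring
        linarith [hexp ▸ hmul]
    calc -∑ g ∈ B, q g * Real.log (q g) = ∑ g ∈ B, -(q g * Real.log (q g)) := by
          rw [Finset.sum_neg_distrib]
      _ ≤ ∑ g ∈ B, (q g * Real.log B.card - q g * Real.log p + (p / B.card - q g)) :=
          Finset.sum_le_sum key
      _ = p * Real.log B.card - p * Real.log p + (B.card * (p / B.card) - p) := by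
          rw [Finset.sum_add_distrib, Finset.sum_sub_distrib, Finset.sum_sub_distrib,
            ← Finset.sum_mul, ← Finset.sum_mul, Finset.sum_const, nsmul_eq_mul, ← hp]
      _ = p * Real.log B.card - p * Real.log p := by field_simp; ring

lemma FI.convPow_nonneg {G : Type*} [Group G] (μ : G → ℝ) (hpos : ∀ g, 0 ≤ μ g) (n : ℕ)
    (g : G) : 0 ≤ convPow μ n g := by
  induction n generalizing g with
  | zero => exact Set.indicator_nonneg (fun _ _ => zero_le_one) g
  | succ n ih => exact finsum_nonneg fun a => mul_nonneg (ih a) (hpos _)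

lemma FI.support_convPow {G : Type*} [Group G] (μ : G → ℝ) {S : Set G}
    (hsupp : Function.support μ = S) (n : ℕ) :
    Function.support (convPow μ n) ⊆ S ^ n := by
  induction n with
  | zero =>
    intro g hg
    have := Set.support_indicator_subset (s := {(1:G)}) (f := fun _ => (1:ℝ)) hg
    simpa [pow_zero] using this
  | succ n ih =>
    intro g hg
    rw [Function.mem_support] at hg
    have hex : ∃ a, convPow μ n a * μ (a⁻¹ * g) ≠ 0 := by
      by_contra hc
      push_neg at hc
      exact hg (finsum_eq_zero_of_forall_eq_zero hc)
    obtain ⟨a, ha⟩ := hex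
    have h1 : convPow μ n a ≠ 0 := fun hz => ha (by simp [hz])
    have h2 : a⁻¹ * g ∈ S := hsupp ▸ (fun hz => ha (by simp [hz]) : μ (a⁻¹ * g) ≠ 0)
    rw [pow_succ]
    simpa using Set.mul_mem_mul (ih h1) h2

lemma FI.convPow_sum {G : Type*} [Group G] (μ : G → ℝ) {S : Set G} (hS : S.Finite)
    (hsupp : Function.support μ = S) (hsum : ∑ᶠ g, μ g = 1) (n : ℕ) :
    ∑ᶠ g, convPow μ n g = 1 := by
  classical
  induction n with
  | zero =>
    have hsub : Function.support (convPow μ 0) ⊆ (({1} : Finset G) : Set G) := by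
      intro g hg
      simpa using Set.support_indicator_subset (s := {(1:G)}) (f := fun _ => (1:ℝ)) hg
    rw [finsum_eq_sum_of_support_subset _ hsub]
    simp [convPow]
  | succ n ih =>
    set A : Finset G := (FI.pow_finite hS n).toFinset with hA
    set A' : Finset G := (FI.pow_finite hS (n+1)).toFinset with hA'
    have hsubA : Function.support (convPow μ n) ⊆ (A : Set G) := by
      rw [hA, Set.Finite.coe_toFinset]; exact FI.support_convPow μ hsupp n
    have hsubA' : Function.support (convPow μ (n+1)) ⊆ (A' : Set G) := by
      rw [hA', Set.Finite.coe_toFinset]; exact FI.support_convPow μ hsupp (n+1)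
    have hconv : ∀ g, convPow μ (n+1) g = ∑ a ∈ A, convPow μ n a * μ (a⁻¹ * g) := by
      intro g
      refine finsum_eq_sum_of_support_subset _ ?_
      intro a ha
      exact hsubA fun hz => ha (by simp [hz])
    rw [finsum_eq_sum_of_support_subset _ hsubA']
    calc ∑ g ∈ A', convPow μ (n+1) g
        = ∑ g ∈ A', ∑ a ∈ A, convPow μ n a * μ (a⁻¹ * g) :=
          Finset.sum_congr rfl fun g _ => hconv g
      _ = ∑ a ∈ A, ∑ g ∈ A', convPow μ n a * μ (a⁻¹ * g) := Finset.sum_comm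
      _ = ∑ a ∈ A, convPow μ n a * ∑ g ∈ A', μ (a⁻¹ * g) := by
          simp [Finset.mul_sum]
      _ = ∑ a ∈ A, convPow μ n a * 1 := by
          refine Finset.sum_congr rfl fun a ha => ?_
          congr 1
          have haS : a ∈ S ^ n := by
            have := (Set.Finite.mem_toFinset _).1 (hA ▸ ha)
            exact this
          have hsub : Function.support (fun g => μ (a⁻¹ * g)) ⊆ (A' : Set G) := by
            intro g hg
            have hmem : a⁻¹ * g ∈ S := hsupp ▸ hg
            rw [hA', Set.Finite.coe_toFinset, pow_succ]
            simpa using Set.mul_mem_mul haS hmem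
          rw [← finsum_eq_sum_of_support_subset _ hsub]
          have hre : ∑ᶠ i, μ (a⁻¹ * ((Equiv.mulLeft a) i)) = ∑ᶠ g, μ (a⁻¹ * g) :=
            finsum_comp_equiv (Equiv.mulLeft a) (f := fun g => μ (a⁻¹ * g))
          simp only [Equiv.coe_mulLeft, inv_mul_cancel_left] at hre
          rw [← hre, hsum]
      _ = 1 := by
          simp only [mul_one]
          rw [← finsum_eq_sum_of_support_subset _ hsubA]
          exact ih

lemma FI.log_nat_nonneg (m : ℕ) : 0 ≤ Real.log (m : ℝ) := by
  rcases Nat.eq_zero_or_pos m with rfl | hm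
  · simp
  · exact Real.log_nonneg (by exact_mod_cast hm)

lemma FI.entropy_bound {G : Type*} [Group G] {S : Set G} (hSfin : S.Finite)
    (hSsym : ∀ s ∈ S, s⁻¹ ∈ S) (hSgen : Subgroup.closure S = ⊤)
    (μ : G → ℝ) (hpos : ∀ g, 0 ≤ μ g) (hsum : ∑ᶠ g, μ g = 1)
    (hsupp : Function.support μ = S)
    {c : ℝ} (hc : 0 ≤ c) {K : ℕ}
    (hK : ∀ k, K ≤ k → Real.log ((wordSphere S k).ncard : ℝ) ≤ c * k) (n : ℕ) :
    shannonEntropy (convPow μ n) ≤ Real.log (n+1)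
      + (∑ k ∈ Finset.range K, Real.log ((wordSphere S k).ncard : ℝ))
      + c * meanLength S μ n := by
  classical
  set q := convPow μ n with hqdef
  set A : Finset G := (FI.pow_finite hSfin n).toFinset with hA
  have hsubA : Function.support q ⊆ (A : Set G) := by
    rw [hA, Set.Finite.coe_toFinset]; exact FI.support_convPow μ hsupp n
  have hq0 : ∀ g, 0 ≤ q g := FI.convPow_nonneg μ hpos n
  have hwl : ∀ g ∈ A, wordLength S g ∈ Finset.range (n+1) := by
    intro g hg
    rw [Finset.mem_range, Nat.lt_succ_iff]
    exact FI.wordLength_le_of_mem_pow ((Set.Finite.mem_toFinset _).1 (hA ▸ hg))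
  set p : ℕ → ℝ := fun k => ∑ g ∈ A.filter (fun g => wordLength S g = k), q g with hpdef
  have hp0 : ∀ k, 0 ≤ p k := fun k => Finset.sum_nonneg fun g _ => hq0 g
  have hqtot : ∑ g ∈ A, q g = 1 := by
    rw [← finsum_eq_sum_of_support_subset _ hsubA]
    exact FI.convPow_sum μ hSfin hsupp hsum n
  have hptot : ∑ k ∈ Finset.range (n+1), p k = 1 := by
    rw [hpdef, Finset.sum_fiberwise_of_maps_to hwl]
    exact hqtot
  have hpk_le : ∀ k ∈ Finset.range (n+1), p k ≤ 1 := by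
    intro k hk
    rw [← hptot]
    exact Finset.single_le_sum (fun j _ => hp0 j) hk
  -- entropy decomposition
  have hH : shannonEntropy q = -∑ k ∈ Finset.range (n+1),
      ∑ g ∈ A.filter (fun g => wordLength S g = k), q g * Real.log (q g) := by
    rw [shannonEntropy, Finset.sum_fiberwise_of_maps_to hwl]
    congr 1
    exact finsum_eq_sum_of_support_subset _
      (fun g hg => hsubA fun hz => hg (by simp [Function.mem_support, hz]))
  -- per-fiber Jensen
  have hfiber : ∀ k ∈ Finset.range (n+1),
      -∑ g ∈ A.filter (fun g => wordLength S g = k), q g * Real.log (q g)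
        ≤ p k * Real.log ((wordSphere S k).ncard : ℝ) - p k * Real.log (p k) := by
    intro k _
    have hj := FI.jensen (A.filter (fun g => wordLength S g = k)) q (fun g _ => hq0 g)
    have hpk : p k = ∑ g ∈ A.filter (fun g => wordLength S g = k), q g := rfl
    rw [← hpk] at hj
    refine hj.trans ?_
    have hcard : (((A.filter (fun g => wordLength S g = k)).card : ℕ) : ℝ)
        ≤ ((wordSphere S k).ncard : ℝ) := by
      have hsubS : ((A.filter (fun g => wordLength S g = k)) : Set G) ⊆ wordSphere S k := by
        intro g hg
        simp only [Finset.coe_filter, Set.mem_setOf_eq] at hg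
        exact hg.2
      have hfin : (wordSphere S k).Finite :=
        (FI.pow_finite hSfin k).subset (FI.sphere_subset_pow hSsym hSgen k)
      have h2 := Set.ncard_le_ncard hsubS hfin
      rw [Set.ncard_coe_finset] at h2
      exact_mod_cast h2
    have hlog : Real.log (((A.filter (fun g => wordLength S g = k)).card : ℕ) : ℝ)
        ≤ Real.log ((wordSphere S k).ncard : ℝ) := by
      rcases Nat.eq_zero_or_pos (A.filter (fun g => wordLength S g = k)).card with hz | hpos'
      · rw [hz]; simpa using FI.log_nat_nonneg (wordSphere S k).ncard
      · exact Real.log_le_log (by exact_mod_cast hpos') hcard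
    have := mul_le_mul_of_nonneg_left hlog (hp0 k)
    linarith
  -- second moment: Jensen on the length distribution
  have hlen : -∑ k ∈ Finset.range (n+1), p k * Real.log (p k) ≤ Real.log (n+1) := by
    have hj := FI.jensen (Finset.range (n+1)) p (fun k _ => hp0 k)
    rw [hptot, Finset.card_range] at hj
    simpa using hj
  -- mean length identity
  have hL : meanLength S μ n = ∑ k ∈ Finset.range (n+1), p k * k := by
    rw [meanLength, ← hqdef,
      finsum_eq_sum_of_support_subset _
        (fun g hg => hsubA (fun hz : q g = 0 => hg (by simp [Function.mem_support, hz])) :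
          Function.support (fun g => q g * (wordLength S g : ℝ)) ⊆ (A : Set G)),
      ← Finset.sum_fiberwise_of_maps_to hwl (fun g => q g * (wordLength S g : ℝ))]
    refine Finset.sum_congr rfl fun k _ => ?_
    rw [hpdef]
    rw [Finset.sum_mul]
    refine Finset.sum_congr rfl fun g hg => ?_
    rw [(Finset.mem_filter.1 hg).2]
  -- volume term bound
  have hvol : ∑ k ∈ Finset.range (n+1), p k * Real.log ((wordSphere S k).ncard : ℝ)
      ≤ (∑ k ∈ Finset.range K, Real.log ((wordSphere S k).ncard : ℝ))
        + c * ∑ k ∈ Finset.range (n+1), p k * k := by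
    have hterm : ∀ k ∈ Finset.range (n+1),
        p k * Real.log ((wordSphere S k).ncard : ℝ)
          ≤ (if k < K then Real.log ((wordSphere S k).ncard : ℝ) else 0)
            + c * (p k * k) := by
      intro k hk
      by_cases hkK : k < K
      · rw [if_pos hkK]
        have h1 : p k * Real.log ((wordSphere S k).ncard : ℝ)
            ≤ Real.log ((wordSphere S k).ncard : ℝ) :=
          mul_le_of_le_one_left (FI.log_nat_nonneg _) (hpk_le k hk)
        have h2 : 0 ≤ c * (p k * k) :=
          mul_nonneg hc (mul_nonneg (hp0 k) (Nat.cast_nonneg k))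
        linarith
      · rw [if_neg hkK]
        have h1 : Real.log ((wordSphere S k).ncard : ℝ) ≤ c * k := hK k (Nat.le_of_not_lt hkK)
        have := mul_le_mul_of_nonneg_left h1 (hp0 k)
        calc p k * Real.log ((wordSphere S k).ncard : ℝ) ≤ p k * (c * k) := this
          _ = 0 + c * (p k * k) := by ring
    calc ∑ k ∈ Finset.range (n+1), p k * Real.log ((wordSphere S k).ncard : ℝ)
        ≤ ∑ k ∈ Finset.range (n+1),
            ((if k < K then Real.log ((wordSphere S k).ncard : ℝ) else 0) + c * (p k * k)) :=
          Finset.sum_le_sum hterm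
      _ = (∑ k ∈ Finset.range (n+1),
            (if k < K then Real.log ((wordSphere S k).ncard : ℝ) else 0))
          + c * ∑ k ∈ Finset.range (n+1), p k * k := by
          rw [Finset.sum_add_distrib, Finset.mul_sum]
      _ ≤ (∑ k ∈ Finset.range K, Real.log ((wordSphere S k).ncard : ℝ))
          + c * ∑ k ∈ Finset.range (n+1), p k * k := by
          gcongr with hx
          · rw [Finset.sum_ite, Finset.sum_const, smul_zero, add_zero]
            refine Finset.sum_le_sum_of_subset_of_nonneg ?_ (fun k _ _ => FI.log_nat_nonneg _)
            intro k hk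
            exact Finset.mem_range.2 (Finset.mem_filter.1 hk).2
  -- assemble
  calc shannonEntropy q
      = ∑ k ∈ Finset.range (n+1),
          -(∑ g ∈ A.filter (fun g => wordLength S g = k), q g * Real.log (q g)) := by
        rw [hH, ← Finset.sum_neg_distrib]
    _ ≤ ∑ k ∈ Finset.range (n+1),
          (p k * Real.log ((wordSphere S k).ncard : ℝ) - p k * Real.log (p k)) :=
        Finset.sum_le_sum hfiber
    _ = (∑ k ∈ Finset.range (n+1), p k * Real.log ((wordSphere S k).ncard : ℝ))
        + (-∑ k ∈ Finset.range (n+1), p k * Real.log (p k)) := by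
        rw [Finset.sum_sub_distrib]; ring
    _ ≤ ((∑ k ∈ Finset.range K, Real.log ((wordSphere S k).ncard : ℝ))
          + c * ∑ k ∈ Finset.range (n+1), p k * k) + Real.log (n+1) := add_le_add hvol hlen
    _ = Real.log (n+1) + (∑ k ∈ Finset.range K, Real.log ((wordSphere S k).ncard : ℝ))
          + c * meanLength S μ n := by rw [hL]; ring

end FIhelpers

/-- Fundamental inequality: `h ≤ l · v`, where `v` is the logarithmic volume, `h` the
entropy of `(G, μ)` and `l` the drift, for any symmetric measure `μ` supported on the
symmetric generating set `S`. -/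
theorem fundamental_inequality {G : Type*} [Group G] [Countable G] [Infinite G] (S : Set G)
    (hSfin : S.Finite) (hSsym : ∀ s ∈ S, s⁻¹ ∈ S) (hSone : (1 : G) ∉ S)
    (hSgen : Subgroup.closure S = ⊤)
    (μ : G → ℝ) (hpos : ∀ g, 0 ≤ μ g) (hsum : ∑ᶠ g, μ g = 1)
    (hμsym : ∀ g, μ g = μ g⁻¹) (hsupp : Function.support μ = S)
    (v h l : ℝ)
    (hv : Tendsto (fun n : ℕ => Real.log ((wordSphere S n).ncard : ℝ) / (n : ℝ)) atTop
      (nhds v))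
    (hh : Tendsto (fun n : ℕ => shannonEntropy (convPow μ n) / (n : ℝ)) atTop (nhds h))
    (hl : Tendsto (fun n : ℕ => meanLength S μ n / (n : ℝ)) atTop (nhds l)) :
    h ≤ l * v := by
  have hv0 : 0 ≤ v :=
    ge_of_tendsto' hv fun n => div_nonneg (FI.log_nat_nonneg _) (Nat.cast_nonneg n)
  have hl0 : 0 ≤ l :=
    ge_of_tendsto' hl fun n => div_nonneg
      (finsum_nonneg fun g =>
        mul_nonneg (FI.convPow_nonneg μ hpos n g) (Nat.cast_nonneg _))
      (Nat.cast_nonneg n)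
  have main : ∀ ε : ℝ, 0 < ε → h ≤ (v + ε) * l := by
    intro ε hε
    have hve : (0:ℝ) ≤ v + ε := by linarith
    have hev : ∀ᶠ n : ℕ in atTop, Real.log ((wordSphere S n).ncard : ℝ) / n < v + ε :=
      hv.eventually_lt_const (by linarith)
    obtain ⟨K0, hK0⟩ := eventually_atTop.1 hev
    set K := max K0 1 with hKdef
    have hK : ∀ k, K ≤ k → Real.log ((wordSphere S k).ncard : ℝ) ≤ (v + ε) * k := by
      intro k hk
      have hk1 : 1 ≤ k := le_trans (le_max_right _ _) hk
      have hkpos : (0:ℝ) < k := by exact_mod_cast hk1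
      have h1 := hK0 k (le_trans (le_max_left _ _) hk)
      have h2 := (div_lt_iff₀ hkpos).1 h1
      linarith
    set C := ∑ k ∈ Finset.range K, Real.log ((wordSphere S k).ncard : ℝ) with hC
    have hbound : ∀ n : ℕ, shannonEntropy (convPow μ n)
        ≤ Real.log ((n:ℝ)+1) + C + (v+ε) * meanLength S μ n := by
      intro n
      have := FI.entropy_bound hSfin hSsym hSgen μ hpos hsum hsupp hve hK n
      simpa using this
    have t1 : Tendsto (fun n : ℕ => Real.log ((n:ℝ)+1) / n) atTop (nhds 0) := by
      have h0 := Real.tendsto_pow_log_div_mul_add_atTop 1 (-1) 1 one_ne_zero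
      have hg : Tendsto (fun n : ℕ => (n:ℝ)+1) atTop atTop :=
        tendsto_atTop_add_const_right _ 1 tendsto_natCast_atTop_atTop
      refine (h0.comp hg).congr fun n => ?_
      simp only [Function.comp_apply, pow_one]
      congr 1
      ring
    have t2 := tendsto_const_div_atTop_nhds_zero_nat C
    have t3 : Tendsto (fun n : ℕ => (v+ε) * (meanLength S μ n / n)) atTop
        (nhds ((v+ε)*l)) := hl.const_mul (v+ε)
    have tR : Tendsto (fun n : ℕ =>
        Real.log ((n:ℝ)+1)/n + C/n + (v+ε)*(meanLength S μ n / n)) atTop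
        (nhds ((v+ε)*l)) := by
      have := (t1.add t2).add t3
      simpa using this
    refine le_of_tendsto_of_tendsto hh tR ?_
    filter_upwards [eventually_gt_atTop 0] with n hn
    have hnp : (0:ℝ) < n := by exact_mod_cast hn
    calc shannonEntropy (convPow μ n) / n
        ≤ (Real.log ((n:ℝ)+1) + C + (v+ε) * meanLength S μ n) / n := by
          gcongr
          exact hbound n
      _ = Real.log ((n:ℝ)+1)/n + C/n + (v+ε)*(meanLength S μ n / n) := by ring
  rcases eq_or_lt_of_le hl0 with hl0' | hlpos
  · calc h ≤ (v+1)*l := main 1 one_pos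
      _ = l * v := by rw [← hl0']; ring
  · refine le_of_forall_pos_le_add fun δ hδ => ?_
    calc h ≤ (v + δ/l)*l := main (δ/l) (div_pos hδ hlpos)
      _ = l*v + δ := by field_simp
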